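/- Let τ0 ∈ (t0,t1] and let ψ : ℝ^m → ℝ be a linear functional that vanishes on the reachable set R(t0,τ) for every τ ∈ [t0,τ0). Then ψ vanishes on R(t0,τ0). (Left semi-continuity of the reachable-set dimension; the key claim in the proof of Proposition 3.2 (iii).) -/

import Mathlib

open MeasureTheory Set Topology Filter

noncomputable section

/-- A control: a measurable, essentially bounded map `ℝ → ℝ^k`. -/
def IsControl (k : ℕ) (u : ℝ → Fin k → ℝ) : Prop :=
  Measurable u ∧ ∃ C : ℝ, ∀ᵐ t : ℝ, ‖u t‖ ≤ C

/-- The endpoint map `E_a(τ, Δu) = ∫_a^τ A(t) · Δu(t) dt`. -/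
def epMap (k m : ℕ) (A : ℝ → Matrix (Fin m) (Fin k) ℝ) (a τ : ℝ)
    (u : ℝ → Fin k → ℝ) : Fin m → ℝ :=
  ∫ t in a..τ, (A t).mulVec (u t)

/-- The reachable set `R(a,τ)` of the characteristic linear control system. -/
def reach (k m : ℕ) (A : ℝ → Matrix (Fin m) (Fin k) ℝ) (a τ : ℝ) :
    Set (Fin m → ℝ) :=
  { v | ∃ u, IsControl k u ∧ epMap k m A a τ u = v }

/-- **Left semi-continuity of the reachable-set dimension** (key claim in the
proof of Proposition 3.2 (iii)). If a linear functional `ψ` on `ℝ^m` vanishes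
on `R(t0,τ)` for every `τ ∈ [t0,τ0)`, then it vanishes on `R(t0,τ0)`. -/
theorem reach_left_semicontinuous
    (t0 t1 : ℝ) (ht : t0 < t1) (k m : ℕ)
    (A : ℝ → Matrix (Fin m) (Fin k) ℝ)
    (hAmeas : ∀ i j, Measurable fun t => A t i j)
    (hAbdd : ∃ C : ℝ, ∀ t ∈ Set.Icc t0 t1, ∀ i j, |A t i j| ≤ C)
    (τ0 : ℝ) (hτ0 : τ0 ∈ Set.Ioc t0 t1)
    (ψ : (Fin m → ℝ) →ₗ[ℝ] ℝ)
    (hψ : ∀ τ ∈ Set.Ico t0 τ0, ∀ v ∈ reach k m A t0 τ, ψ v = 0) :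
    ∀ v ∈ reach k m A t0 τ0, ψ v = 0 := by
  rintro v ⟨u, ⟨humeas, Cu, hCu⟩, rfl⟩
  obtain ⟨C, hC⟩ := hAbdd
  set g : ℝ → Fin m → ℝ := fun t => (A t).mulVec (u t) with hg
  have hgmeas : Measurable g := by
    apply measurable_pi_lambda
    intro i
    have : (fun t => g t i) = fun t => ∑ j : Fin k, A t i j * u t j := by
      funext t; simp [hg, Matrix.mulVec, dotProduct]
    rw [this]
    apply Finset.measurable_sum
    intro j _
    exact (hAmeas i j).mul ((measurable_pi_apply j).comp humeas)
  -- bound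
  set D : ℝ := (k : ℝ) * (max C 0) * (max Cu 0) with hD
  have hDnn : 0 ≤ D := by positivity
  have hIcc : Icc t0 τ0 ⊆ Icc t0 t1 := Icc_subset_Icc le_rfl hτ0.2
  have hbound : ∀ᵐ t ∂(volume.restrict (Icc t0 τ0)), ‖g t‖ ≤ D := by
    filter_upwards [ae_restrict_of_ae hCu, ae_restrict_mem measurableSet_Icc] with t hu ht
    rw [pi_norm_le_iff_of_nonneg hDnn]
    intro i
    have : ‖g t i‖ ≤ ∑ j : Fin k, |A t i j| * |u t j| := by
      simp only [hg, Matrix.mulVec, dotProduct, Real.norm_eq_abs]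
      refine (Finset.abs_sum_le_sum_abs _ _).trans ?_
      simp [abs_mul]
    refine this.trans ?_
    calc ∑ j : Fin k, |A t i j| * |u t j|
        ≤ ∑ _j : Fin k, (max C 0) * (max Cu 0) := by
          refine Finset.sum_le_sum fun j _ => ?_
          have h1 : |A t i j| ≤ max C 0 :=
            (hC t (hIcc ht) i j).trans (le_max_left _ _)
          have h2 : |u t j| ≤ max Cu 0 := by
            refine le_trans ?_ (le_trans hu (le_max_left _ _))
            exact norm_le_pi_norm (u t) j
          exact mul_le_mul h1 h2 (abs_nonneg _) (le_max_right _ _)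
      _ = D := by simp [hD]; ring
  have hInt : IntegrableOn g (Icc t0 τ0) := by
    refine Integrable.mono' (integrableOn_const ?_)
      hgmeas.aestronglyMeasurable.restrict hbound
    simp [Real.volume_Icc]
  have hψcont : Continuous ψ := ψ.continuous_of_finiteDimensional
  have hle : t0 ≤ τ0 := hτ0.1.le
  have huIcc : uIcc t0 τ0 = Icc t0 τ0 := uIcc_of_le hle
  have hcont : ContinuousOn (fun x => ψ (∫ t in t0..x, g t)) (Icc t0 τ0) := by
    have := intervalIntegral.continuousOn_primitive_interval (a := t0) (b := τ0)
      (f := g) (μ := volume) (by rwa [huIcc])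
    rw [huIcc] at this
    exact hψcont.comp_continuousOn this
  have hmem : τ0 ∈ Icc t0 τ0 := ⟨hle, le_rfl⟩
  have hcw : ContinuousWithinAt (fun x => ψ (∫ t in t0..x, g t)) (Ico t0 τ0) τ0 :=
    (hcont τ0 hmem).mono Ico_subset_Icc_self
  have hne : (𝓝[Ico t0 τ0] τ0).NeBot := by
    rw [← mem_closure_iff_nhdsWithin_neBot, closure_Ico hτ0.1.ne]
    exact hmem
  have hzero : Filter.Tendsto (fun x => ψ (∫ t in t0..x, g t)) (𝓝[Ico t0 τ0] τ0) (𝓝 0) := by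
    have : ∀ x ∈ Ico t0 τ0, ψ (∫ t in t0..x, g t) = 0 := fun x hx =>
      hψ x hx _ ⟨u, ⟨humeas, Cu, hCu⟩, rfl⟩
    refine Filter.Tendsto.congr' ?_ tendsto_const_nhds
    filter_upwards [self_mem_nhdsWithin] with x hx
    exact (this x hx).symm
  have := tendsto_nhds_unique hcw.tendsto hzero
  simpa [epMap, hg] using this
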